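/- Let τ_1, …, τ_k be non-negative real random variables on a probability space (Ω, F, P) (no independence is assumed). Let δ > 0, T > 0 and p ∈ [0, 1] be such that δk > T and P(τ_ℓ ≤ δ) ≤ p for every ℓ ∈ {1, …, k}. Then P( τ_1 + ⋯ + τ_k ≤ T ) ≤ (δk / (δk − T)) · p. -/

import Mathlib

open MeasureTheory Set ENNReal

/-- tail bound for a sum of non-negative random variables. -/
theorem stmt3 {Ω : Type*} [MeasurableSpace Ω] (P : Measure Ω) [IsProbabilityMeasure P]
    (k : ℕ) (hk : 0 < k) (τ : Fin k → Ω → ℝ)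
    (hmeas : ∀ ℓ, Measurable (τ ℓ))
    (hnonneg : ∀ ℓ ω, 0 ≤ τ ℓ ω)
    (δ T p : ℝ) (hδ : 0 < δ) (hT : 0 < T) (hp : p ∈ Icc (0:ℝ) 1)
    (hδk : T < δ * k)
    (htail : ∀ ℓ, P {ω | τ ℓ ω ≤ δ} ≤ ENNReal.ofReal p) :
    P {ω | (∑ ℓ, τ ℓ ω) ≤ T} ≤ ENNReal.ofReal ((δ * k / (δ * k - T)) * p) := by
  classical
  set A : Fin k → Set Ω := fun ℓ => {ω | τ ℓ ω ≤ δ} with hA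
  set B : Set Ω := {ω | (∑ ℓ, τ ℓ ω) ≤ T} with hB
  have hAmeas : ∀ ℓ, MeasurableSet (A ℓ) :=
    fun ℓ => measurableSet_le (hmeas ℓ) measurable_const
  have hBmeas : MeasurableSet B :=
    measurableSet_le (Finset.measurable_sum _ fun ℓ _ => hmeas ℓ) measurable_const
  set c : ℝ := (δ * k - T) / δ with hc
  have hcpos : 0 < c := div_pos (by linarith) hδ
  -- pointwise: on B, at least c of the indicators are on
  have hpt : ∀ ω ∈ B, ENNReal.ofReal c ≤ ∑ ℓ, (A ℓ).indicator (fun _ => (1:ℝ≥0∞)) ω := by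
    intro ω hω
    have hsum : ∑ ℓ, (A ℓ).indicator (fun _ => (1:ℝ≥0∞)) ω
        = ((Finset.univ.filter (fun ℓ => ω ∈ A ℓ)).card : ℝ≥0∞) := by
      rw [Finset.card_eq_sum_ones, Finset.sum_filter]
      push_cast
      refine Finset.sum_congr rfl fun ℓ _ => ?_
      by_cases h : ω ∈ A ℓ <;> simp [Set.indicator, h]
    rw [hsum]
    set S := Finset.univ.filter (fun ℓ => ω ∈ A ℓ) with hS
    set Sc := Finset.univ.filter (fun ℓ => ¬ ω ∈ A ℓ) with hSc
    have h1 : δ * (Sc.card : ℝ) ≤ T := by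
      calc δ * (Sc.card : ℝ) = ∑ _ℓ ∈ Sc, δ := by
            rw [Finset.sum_const, nsmul_eq_mul, mul_comm]
        _ ≤ ∑ ℓ ∈ Sc, τ ℓ ω := by
            refine Finset.sum_le_sum fun ℓ hℓ => ?_
            simp only [hSc, Finset.mem_filter, hA, Set.mem_setOf_eq] at hℓ
            linarith [hℓ.2, le_of_not_ge hℓ.2]
        _ ≤ ∑ ℓ, τ ℓ ω :=
            Finset.sum_le_sum_of_subset_of_nonneg (Finset.filter_subset _ _)
              (fun i _ _ => hnonneg i ω)
        _ ≤ T := hω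
    have hcards : (S.card : ℝ) + (Sc.card : ℝ) = k := by
      have := Finset.card_filter_add_card_filter_not
        (s := (Finset.univ : Finset (Fin k))) (p := fun ℓ => ω ∈ A ℓ)
      rw [Finset.card_univ, Fintype.card_fin] at this
      exact_mod_cast this
    have hcard : c ≤ (S.card : ℝ) := by
      rw [hc, div_le_iff₀ hδ]
      nlinarith
    calc ENNReal.ofReal c ≤ ENNReal.ofReal (S.card : ℝ) :=
          ENNReal.ofReal_le_ofReal hcard
      _ = (S.card : ℝ≥0∞) := ENNReal.ofReal_natCast _
  have key : ENNReal.ofReal c * P B ≤ (k : ℝ≥0∞) * ENNReal.ofReal p := by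
    calc ENNReal.ofReal c * P B = ∫⁻ _ω in B, ENNReal.ofReal c ∂P := by
          rw [setLIntegral_const]
      _ ≤ ∫⁻ ω in B, ∑ ℓ, (A ℓ).indicator (fun _ => (1:ℝ≥0∞)) ω ∂P := by
          refine setLIntegral_mono (Finset.measurable_sum _ fun ℓ _ =>
            (measurable_const.indicator (hAmeas ℓ))) hpt
      _ = ∑ ℓ, ∫⁻ ω in B, (A ℓ).indicator (fun _ => (1:ℝ≥0∞)) ω ∂P := by
          rw [lintegral_finset_sum _ fun ℓ _ => measurable_const.indicator (hAmeas ℓ)]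
      _ = ∑ ℓ, P (A ℓ ∩ B) := by
          refine Finset.sum_congr rfl fun ℓ _ => ?_
          rw [lintegral_indicator (hAmeas ℓ), setLIntegral_one, Measure.restrict_apply (hAmeas ℓ)]
      _ ≤ ∑ ℓ, P (A ℓ) :=
          Finset.sum_le_sum fun ℓ _ => measure_mono inter_subset_left
      _ ≤ ∑ _ℓ : Fin k, ENNReal.ofReal p := Finset.sum_le_sum fun ℓ _ => htail ℓ
      _ = (k : ℝ≥0∞) * ENNReal.ofReal p := by
          rw [Finset.sum_const, Finset.card_univ, Fintype.card_fin, nsmul_eq_mul]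
  have hc0 : ENNReal.ofReal c ≠ 0 := by
    simp [ENNReal.ofReal_eq_zero, not_le, hcpos]
  have hfin : ENNReal.ofReal c ≠ ⊤ := ENNReal.ofReal_ne_top
  have hPB : P B ≤ ((k : ℝ≥0∞) * ENNReal.ofReal p) / ENNReal.ofReal c := by
    rw [ENNReal.le_div_iff_mul_le (Or.inl hc0) (Or.inl hfin), mul_comm]
    exact key
  refine hPB.trans (le_of_eq ?_)
  have hkc : ((k : ℝ≥0∞) : ℝ≥0∞) * ENNReal.ofReal p = ENNReal.ofReal ((k : ℝ) * p) := by
    rw [ENNReal.ofReal_mul (by positivity), ENNReal.ofReal_natCast]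
  rw [hkc, ← ENNReal.ofReal_div_of_pos hcpos]
  congr 1
  rw [hc]
  field_simp
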